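/- Let G_{τ₁,m} and G_{τ₂,m} be isomorphic historical m-hop subgraphs via π with time offset Δ = t' − t. For an annotated temporal random walk W = ((z₀,t₀),(e₁,z₁,t₁),…,(e_m,z_m,t_m)) within G_{τ₁,m}, define π(W) = ((π(z₀),t₀+Δ),(π(e₁),π(z₁),t₁+Δ),…,(π(e_m),π(z_m),t_m+Δ)), where π(e) = {π(a) : a ∈ e}. Then W ↦ π(W) is a bijection from the set of length-m annotated temporal random walks within G_{τ₁,m} starting at (z₀,t₀) onto the set of length-m annotated temporal random walks within G_{τ₂,m} starting at (π(z₀),t₀+Δ), and it preserves sampling probabilities: P₂(π(W)) = P₁(W) for every such W, where P₁ and P₂ denote the annotated-walk sampling probabilities computed within G_{τ₁,m} and G_{τ₂,m} respectively. -/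
import Mathlib


/-!
STATEMENT 2: If two historical m-hop subgraphs are isomorphic via π with time offset Δ,
then W ↦ π(W) is a bijection from the set of length-m annotated temporal random walks
within G₁ starting at (z₀,t₀) onto those within G₂ starting at (π(z₀),t₀+Δ), and it
preserves sampling probabilities: P₂(π(W)) = P₁(W).
-/

open scoped Classical

namespace HIT

variable {V V' : Type*}

/-- The candidate set `C(z,s)` of temporal hyperedges containing `z` with timestamp before `s`. -/
noncomputable def cand (H : Finset (Finset V × ℝ)) (z : V) (s : ℝ) :
    Finset (Finset V × ℝ) :=
  H.filter (fun et => z ∈ et.1 ∧ et.2 < s)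

/-- The sampling weight `w(e,t;s) = (|e|−1)·exp(α·(s−t))` of a temporal hyperedge. -/
noncomputable def weight (α : ℝ) (s : ℝ) (et : Finset V × ℝ) : ℝ :=
  ((et.1.card : ℝ) - 1) * Real.exp (α * (s - et.2))

/-- An annotated temporal random walk, recorded as the list of steps `((e_l,t_l),z_l)`,
is valid from current node `z` and current time `s` if each hyperedge is a candidate at the
current state and the next node is drawn from the hyperedge minus the current node. -/
def ValidWalk (H : Finset (Finset V × ℝ)) : V → ℝ → List ((Finset V × ℝ) × V) → Prop
  | _, _, [] => True
  | z, s, (et, z') :: rest =>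
      et ∈ H ∧ z ∈ et.1 ∧ et.2 < s ∧ z' ∈ et.1 ∧ z' ≠ z ∧ ValidWalk H z' et.2 rest

/-- The sampling probability `P(W)` of an annotated temporal random walk. -/
noncomputable def walkProb (α : ℝ) (H : Finset (Finset V × ℝ)) :
    V → ℝ → List ((Finset V × ℝ) × V) → ℝ
  | _, _, [] => 1
  | z, s, (et, z') :: rest =>
      (weight α s et / ∑ et' ∈ cand H z s, weight α s et') *
        (1 / ((et.1.card : ℝ) - 1)) * walkProb α H z' et.2 rest

/-- The node set of a temporal hypergraph: all nodes covered by its hyperedges. -/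
noncomputable def nodes [DecidableEq V] (H : Finset (Finset V × ℝ)) : Finset V :=
  H.biUnion (fun et => et.1)

/-- `π` together with the time offset `Δ` is an isomorphism of temporal hypergraphs from
`H1` to `H2`: `π` is a bijection from the node set of `H1` onto the node set of `H2`, and
`(ẽ,t̃)` is a temporal hyperedge of `H1` iff `(π(ẽ), t̃+Δ)` is a temporal hyperedge of `H2`. -/
structure IsIso [DecidableEq V] [DecidableEq V'] (π : V → V') (Δ : ℝ)
    (H1 : Finset (Finset V × ℝ)) (H2 : Finset (Finset V' × ℝ)) : Prop where
  injOn : Set.InjOn π (nodes H1 : Set V)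
  image_nodes : (nodes H1).image π = nodes H2
  map_mem : ∀ e s, (e, s) ∈ H1 → (e.image π, s + Δ) ∈ H2
  mem_map : ∀ e' s', (e', s') ∈ H2 → ∃ e s, (e, s) ∈ H1 ∧ e' = e.image π ∧ s' = s + Δ

/-- The image `π(W)` of an annotated temporal random walk under a node map `π` with time
offset `Δ`: each step `((e,t),z)` is sent to `((π(e), t+Δ), π(z))`. -/
noncomputable def mapWalk [DecidableEq V'] (π : V → V') (Δ : ℝ)
    (W : List ((Finset V × ℝ) × V)) : List ((Finset V' × ℝ) × V') :=
  W.map (fun st => ((st.1.1.image π, st.1.2 + Δ), π st.2))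

section Aux

variable [DecidableEq V] [DecidableEq V'] {π : V → V'} {Δ : ℝ}
  {H1 : Finset (Finset V × ℝ)} {H2 : Finset (Finset V' × ℝ)}

lemma subset_nodes {H : Finset (Finset V × ℝ)} {et : Finset V × ℝ} (h : et ∈ H) :
    et.1 ⊆ nodes H := fun a ha => Finset.mem_biUnion.2 ⟨et, h, ha⟩

lemma image_card_eq (hiso : IsIso π Δ H1 H2) {e : Finset V} (he : e ⊆ nodes H1) :
    (e.image π).card = e.card :=
  Finset.card_image_of_injOn (hiso.injOn.mono (Finset.coe_subset.2 he))

lemma image_inj (hiso : IsIso π Δ H1 H2) {e1 e2 : Finset V}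
    (h1 : e1 ⊆ nodes H1) (h2 : e2 ⊆ nodes H1)
    (h : e1.image π = e2.image π) : e1 = e2 := by
  apply Finset.coe_injective
  have := (hiso.injOn.image_eq_image_iff (Finset.coe_subset.2 h1) (Finset.coe_subset.2 h2))
  rw [← this, ← Finset.coe_image, ← Finset.coe_image, h]

lemma mem_of_pi_mem_image (hiso : IsIso π Δ H1 H2) {e : Finset V} {z : V}
    (he : e ⊆ nodes H1) (hz : z ∈ nodes H1) (h : π z ∈ e.image π) : z ∈ e := by
  obtain ⟨a, ha, hpa⟩ := Finset.mem_image.1 h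
  rwa [← hiso.injOn (he ha) hz hpa]

lemma mem_cand {H : Finset (Finset V × ℝ)} {z : V} {s : ℝ} {et : Finset V × ℝ} :
    et ∈ cand H z s ↔ et ∈ H ∧ z ∈ et.1 ∧ et.2 < s := by
  simp [cand, and_assoc]

lemma sum_weight_map (hiso : IsIso π Δ H1 H2) (α : ℝ) {z : V} (hz : z ∈ nodes H1) (s : ℝ) :
    ∑ et' ∈ cand H2 (π z) (s + Δ), weight α (s + Δ) et'
      = ∑ et ∈ cand H1 z s, weight α s et := by
  refine (Finset.sum_bij (fun (et : Finset V × ℝ) _ => (et.1.image π, et.2 + Δ)) ?_ ?_ ?_ ?_).symm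
  · rintro ⟨e, t⟩ h
    obtain ⟨hH, hze, hts⟩ := mem_cand.1 h
    exact mem_cand.2 ⟨hiso.map_mem e t hH,
      Finset.mem_image_of_mem _ hze, by simp only; linarith⟩
  · rintro ⟨e1, t1⟩ h1 ⟨e2, t2⟩ h2 heq
    obtain ⟨hH1, -⟩ := mem_cand.1 h1
    obtain ⟨hH2, -⟩ := mem_cand.1 h2
    obtain ⟨he, ht⟩ := Prod.mk.injEq .. ▸ heq
    have : e1 = e2 := image_inj hiso (subset_nodes hH1) (subset_nodes hH2) he
    have ht' : t1 = t2 := by linarith [ht]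
    simp [this, ht']
  · rintro ⟨e', t'⟩ h'
    obtain ⟨hH', hze', hts'⟩ := mem_cand.1 h'
    obtain ⟨e, t, hH, he, ht⟩ := hiso.mem_map e' t' hH'
    have hze : z ∈ e := mem_of_pi_mem_image hiso (subset_nodes hH) hz (he ▸ hze')
    have hts : t < s := by
      have := ht ▸ hts'
      simp only at this; linarith
    exact ⟨(e, t), mem_cand.2 ⟨hH, hze, hts⟩, by simp [he, ht]⟩
  · rintro ⟨e, t⟩ h
    obtain ⟨hH, -⟩ := mem_cand.1 h
    unfold weight
    simp only
    rw [image_card_eq hiso (subset_nodes hH)]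
    ring_nf

lemma valid_map (hiso : IsIso π Δ H1 H2) :
    ∀ (W : List ((Finset V × ℝ) × V)) (z : V) (s : ℝ),
    z ∈ nodes H1 → ValidWalk H1 z s W → ValidWalk H2 (π z) (s + Δ) (mapWalk π Δ W)
  | [], _, _, _, _ => trivial
  | ((e, t), z') :: rest, z, s, hz, ⟨hH, hze, hts, hz'e, hne, hrest⟩ => by
    have hz' : z' ∈ nodes H1 := subset_nodes hH hz'e
    refine ⟨hiso.map_mem e t hH, Finset.mem_image_of_mem _ hze, by simp only; linarith,
      Finset.mem_image_of_mem _ hz'e, ?_, valid_map hiso rest z' t hz' hrest⟩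
    intro h
    exact hne (hiso.injOn hz' hz h)

lemma prob_map (hiso : IsIso π Δ H1 H2) (α : ℝ) :
    ∀ (W : List ((Finset V × ℝ) × V)) (z : V) (s : ℝ),
    z ∈ nodes H1 → ValidWalk H1 z s W →
    walkProb α H2 (π z) (s + Δ) (mapWalk π Δ W) = walkProb α H1 z s W
  | [], _, _, _, _ => rfl
  | ((e, t), z') :: rest, z, s, hz, ⟨hH, hze, hts, hz'e, hne, hrest⟩ => by
    have hz' : z' ∈ nodes H1 := subset_nodes hH hz'e
    show (weight α (s + Δ) (e.image π, t + Δ) / ∑ et' ∈ cand H2 (π z) (s + Δ), weight α (s + Δ) et') *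
        (1 / (((e.image π).card : ℝ) - 1)) * walkProb α H2 (π z') (t + Δ) (mapWalk π Δ rest) = _
    rw [sum_weight_map hiso α hz s, prob_map hiso α rest z' t hz' hrest,
      image_card_eq hiso (subset_nodes hH)]
    show (weight α (s + Δ) (e.image π, t + Δ) / _) * _ * _
      = (weight α s (e, t) / _) * _ * _
    have : weight α (s + Δ) (e.image π, t + Δ) = weight α s (e, t) := by
      unfold weight
      simp only
      rw [image_card_eq hiso (subset_nodes hH)]
      ring_nf
    rw [this]

lemma map_injOn_aux (hiso : IsIso π Δ H1 H2) :
    ∀ (W1 W2 : List ((Finset V × ℝ) × V)) (z : V) (s : ℝ),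
    z ∈ nodes H1 → ValidWalk H1 z s W1 → ValidWalk H1 z s W2 →
    mapWalk π Δ W1 = mapWalk π Δ W2 → W1 = W2
  | [], [], _, _, _, _, _, _ => rfl
  | [], _ :: _, _, _, _, _, _, h => by simp [mapWalk] at h
  | _ :: _, [], _, _, _, _, _, h => by simp [mapWalk] at h
  | ((e1, t1), z1) :: r1, ((e2, t2), z2) :: r2, z, s, hz, hv1, hv2, h => by
    obtain ⟨hH1, _, _, hz1, _, hr1⟩ := hv1
    obtain ⟨hH2, _, _, hz2, _, hr2⟩ := hv2
    simp only [mapWalk, List.map_cons, List.cons.injEq, Prod.mk.injEq] at h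
    obtain ⟨⟨⟨he, ht⟩, hzz⟩, hrest⟩ := h
    have he' : e1 = e2 := image_inj hiso (subset_nodes hH1) (subset_nodes hH2) he
    have ht' : t1 = t2 := by linarith
    have hz' : z1 = z2 := hiso.injOn (subset_nodes hH1 hz1) (subset_nodes hH2 hz2) hzz
    subst he' ht' hz'
    have := map_injOn_aux hiso r1 r2 z1 t1 (subset_nodes hH1 hz1) hr1 hr2 hrest
    rw [this]

lemma map_surj_aux (hiso : IsIso π Δ H1 H2) :
    ∀ (W' : List ((Finset V' × ℝ) × V')) (z : V) (s : ℝ),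
    z ∈ nodes H1 → ValidWalk H2 (π z) (s + Δ) W' →
    ∃ W, ValidWalk H1 z s W ∧ mapWalk π Δ W = W'
  | [], _, _, _, _ => ⟨[], trivial, rfl⟩
  | ((e', t'), y') :: rest', z, s, hz, ⟨hH', hze', hts', hy'e', hne', hrest'⟩ => by
    obtain ⟨e, t, hH, he, ht⟩ := hiso.mem_map e' t' hH'
    subst he ht
    have hze : z ∈ e := mem_of_pi_mem_image hiso (subset_nodes hH) hz hze'
    obtain ⟨y, hye, hpy⟩ := Finset.mem_image.1 hy'e'
    have hy : y ∈ nodes H1 := subset_nodes hH hye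
    have hts : t < s := by simp only at hts'; linarith
    obtain ⟨W, hW, hWmap⟩ := map_surj_aux hiso rest' y t hy (by rwa [hpy])
    refine ⟨((e, t), y) :: W, ⟨hH, hze, hts, hye, ?_, hW⟩, ?_⟩
    · rintro rfl; exact hne' hpy.symm
    · simp [mapWalk, hpy] at hWmap ⊢
      exact hWmap

end Aux

theorem walk_bijection [DecidableEq V] [DecidableEq V']
    (H1 : Finset (Finset V × ℝ)) (H2 : Finset (Finset V' × ℝ))
    (hcard1 : ∀ et ∈ H1, 2 ≤ et.1.card) (hcard2 : ∀ et ∈ H2, 2 ≤ et.1.card)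
    (u v w : V) (u' v' w' : V') (t t' : ℝ) (π : V → V') (Δ : ℝ) (hΔ : Δ = t' - t)
    (hiso : IsIso π Δ H1 H2)
    (hUV : ({π u, π v} : Finset V') = {u', v'}) (hW : π w = w')
    (α : ℝ) (hα : 0 ≤ α) (m : ℕ) (z0 : V) (hz0 : z0 ∈ nodes H1) (t0 : ℝ) :
    Set.BijOn (mapWalk π Δ)
      {W : List ((Finset V × ℝ) × V) | W.length = m ∧ ValidWalk H1 z0 t0 W}
      {W' : List ((Finset V' × ℝ) × V') | W'.length = m ∧ ValidWalk H2 (π z0) (t0 + Δ) W'} ∧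
    ∀ W : List ((Finset V × ℝ) × V), W.length = m → ValidWalk H1 z0 t0 W →
      walkProb α H2 (π z0) (t0 + Δ) (mapWalk π Δ W) = walkProb α H1 z0 t0 W := by
  constructor
  · refine ⟨?_, ?_, ?_⟩
    · rintro W ⟨hlen, hvalid⟩
      exact ⟨by simp [mapWalk, hlen], valid_map hiso W z0 t0 hz0 hvalid⟩
    · rintro W1 ⟨h1len, h1v⟩ W2 ⟨h2len, h2v⟩ h
      exact map_injOn_aux hiso W1 W2 z0 t0 hz0 h1v h2v h
    · rintro W' ⟨hlen, hvalid⟩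
      obtain ⟨W, hWv, hWmap⟩ := map_surj_aux hiso W' z0 t0 hz0 hvalid
      refine ⟨W, ⟨?_, hWv⟩, hWmap⟩
      have : (mapWalk π Δ W).length = W.length := by simp [mapWalk]
      rw [← hlen, ← hWmap, this]
  · intro W hlen hvalid
    exact prob_map hiso α W z0 t0 hz0 hvalid

end HIT
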